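/- arXiv:0902.4175 — 6 statements merged into one kernel-verified Lean document; each statement's English description precedes it below -/
import Mathlib

section
/- Let a, F : ℝ → ℝ be continuous, G : ℝ → ℝ continuous, and let A be an antiderivative of a, H an antiderivative of x ↦ F(x)·exp(A(x)), and K an antiderivative of G. If y : ℝ → ℝ is twice differentiable and satisfies y'(x) = (H(x) + K(y(x)))·exp(−A(x)) for all x, then y satisfies y''(x) + a(x)·y'(x) = F(x) + y'(x)·G(y(x))·exp(−A(x)) for all x. -/
/-- First-class reduction: if `y' = (H(x) + K(y))·e^{-A(x)}` with `H' = F·e^A`, `K' = G`,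
then `y'' + a(x)y' = F(x) + y'·G(y)·e^{-A(x)}`. -/
theorem stmt_0 (a F G A H K y : ℝ → ℝ)
    (ha : Continuous a) (hF : Continuous F) (hG : Continuous G)
    (hA : ∀ x, HasDerivAt A (a x) x)
    (hH : ∀ x, HasDerivAt H (F x * Real.exp (A x)) x)
    (hK : ∀ u, HasDerivAt K (G u) u)
    (hy : Differentiable ℝ y) (hy' : Differentiable ℝ (deriv y))
    (heq : ∀ x, deriv y x = (H x + K (y x)) * Real.exp (-A x)) :
    ∀ x, deriv (deriv y) x + a x * deriv y x
      = F x + deriv y x * G (y x) * Real.exp (-A x) := by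
  intro x
  have hdy : deriv y = fun x => (H x + K (y x)) * Real.exp (-A x) := funext heq
  have hy0 : HasDerivAt y (deriv y x) x := (hy x).hasDerivAt
  have hKy : HasDerivAt (fun x => K (y x)) (G (y x) * deriv y x) x :=
    (hK (y x)).comp x hy0
  have hexp : HasDerivAt (fun x => Real.exp (-A x)) (Real.exp (-A x) * (-a x)) x :=
    ((hA x).neg).exp
  have h1 := ((hH x).add hKy).mul hexp
  have h2 : deriv (deriv y) x
      = (F x * Real.exp (A x) + G (y x) * deriv y x) * Real.exp (-A x)
        + (H x + K (y x)) * (Real.exp (-A x) * (-a x)) := by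
    exact (congrFun (congrArg deriv hdy) x).trans h1.deriv
  have h3 : (H x + K (y x)) * Real.exp (-A x) = deriv y x := (heq x).symm
  have h4 : Real.exp (A x) * Real.exp (-A x) = 1 := by
    rw [← Real.exp_add]; simp
  rw [h2]
  calc (F x * Real.exp (A x) + G (y x) * deriv y x) * Real.exp (-A x)
        + (H x + K (y x)) * (Real.exp (-A x) * (-a x)) + a x * deriv y x
      = F x * (Real.exp (A x) * Real.exp (-A x)) + deriv y x * G (y x) * Real.exp (-A x)
        + ((H x + K (y x)) * Real.exp (-A x)) * (-a x) + a x * deriv y x := by ring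
    _ = F x + deriv y x * G (y x) * Real.exp (-A x) := by rw [h4, h3]; ring
end

section
/- Let a, G : ℝ → ℝ be continuous, F : ℝ → ℝ continuous, and let A be an antiderivative of a, H an antiderivative of F, and K an antiderivative of y ↦ G(y)·exp(A(y)). If y : ℝ → ℝ is twice differentiable and satisfies y'(x) = (H(x) + K(y(x)))·exp(−A(y(x))) for all x, then y satisfies y''(x) + a(y(x))·(y'(x))² = F(x)·exp(−A(y(x))) + y'(x)·G(y(x)) for all x. -/
/-- Second-class reduction: if `y' = (H(x) + K(y))·e^{-A(y)}` with `H' = F`,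
`K'(u) = G(u)·e^{A(u)}`, then `y'' + a(y)(y')² = F(x)·e^{-A(y)} + y'·G(y)`. -/
theorem stmt_1 (a F G A H K y : ℝ → ℝ)
    (ha : Continuous a) (hF : Continuous F) (hG : Continuous G)
    (hA : ∀ u, HasDerivAt A (a u) u)
    (hH : ∀ x, HasDerivAt H (F x) x)
    (hK : ∀ u, HasDerivAt K (G u * Real.exp (A u)) u)
    (hy : Differentiable ℝ y) (hy' : Differentiable ℝ (deriv y))
    (heq : ∀ x, deriv y x = (H x + K (y x)) * Real.exp (-A (y x))) :
    ∀ x, deriv (deriv y) x + a (y x) * (deriv y x) ^ 2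
      = F x * Real.exp (-A (y x)) + deriv y x * G (y x) := by
  intro x
  have hyx : HasDerivAt y (deriv y x) x := (hy x).hasDerivAt
  have hKy : HasDerivAt (fun x => K (y x)) (G (y x) * Real.exp (A (y x)) * deriv y x) x :=
    (hK (y x)).comp x hyx
  have hAy : HasDerivAt (fun x => A (y x)) (a (y x) * deriv y x) x := (hA (y x)).comp x hyx
  have hexp : HasDerivAt (fun x => Real.exp (-A (y x)))
      (Real.exp (-A (y x)) * -(a (y x) * deriv y x)) x := hAy.neg.exp
  have hmul := ((hH x).add hKy).mul hexp
  have hfun : deriv y = fun x => (H x + K (y x)) * Real.exp (-A (y x)) := funext heq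
  have hd : deriv (deriv y) x =
      (F x + G (y x) * Real.exp (A (y x)) * deriv y x) * Real.exp (-A (y x))
        + (H x + K (y x)) * (Real.exp (-A (y x)) * -(a (y x) * deriv y x)) := by
    conv_lhs => rw [hfun]
    exact hmul.deriv
  have he : Real.exp (A (y x)) * Real.exp (-A (y x)) = 1 := by
    rw [← Real.exp_add]; simp
  have hy2 : (H x + K (y x)) * Real.exp (-A (y x)) = deriv y x := (heq x).symm
  rw [hd]
  ring_nf
  linear_combination G (y x) * deriv y x * he - a (y x) * deriv y x * hy2
end

section
/- Let m be a natural number, a : ℝ → ℝ continuous with antiderivative A, and F : ℝ × ℝ → ℝ. Suppose K : ℝ → ℝ is differentiable and satisfies K(u)^{m+1}·K'(u) = F(u, K(u)) for all u. If y : ℝ → ℝ is twice differentiable and satisfies y'(x) = K(y(x))·exp(−A(x)) for all x, then y satisfies (y'(x))^m·y''(x) + a(x)·(y'(x))^{m+1} = exp(−(m+2)·A(x))·F(y(x), y'(x)·exp(A(x))) for all x. -/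
/-- Third-class reduction: if `K^{m+1}·K' = F(u, K(u))` and `y' = K(y)·e^{-A(x)}`,
then `(y')^m y'' + a(x)(y')^{m+1} = e^{-(m+2)A(x)}·F(y, y'·e^{A(x)})`. -/
theorem stmt_2 (m : ℕ) (a A K y : ℝ → ℝ) (F : ℝ × ℝ → ℝ)
    (ha : Continuous a)
    (hA : ∀ x, HasDerivAt A (a x) x)
    (hKdiff : Differentiable ℝ K)
    (hKeq : ∀ u, K u ^ (m + 1) * deriv K u = F (u, K u))
    (hy : Differentiable ℝ y) (hy' : Differentiable ℝ (deriv y))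
    (heq : ∀ x, deriv y x = K (y x) * Real.exp (-A x)) :
    ∀ x, (deriv y x) ^ m * deriv (deriv y) x + a x * (deriv y x) ^ (m + 1)
      = Real.exp (-((m : ℝ) + 2) * A x) * F (y x, deriv y x * Real.exp (A x)) := by
  intro x
  have hyK : HasDerivAt (fun x => K (y x)) (deriv K (y x) * deriv y x) x :=
    ((hKdiff (y x)).hasDerivAt).comp x (hy x).hasDerivAt
  have hexp : HasDerivAt (fun x => Real.exp (-A x)) (Real.exp (-A x) * (-a x)) x :=
    ((hA x).neg).exp
  have hmul : HasDerivAt (fun x => K (y x) * Real.exp (-A x))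
      (deriv K (y x) * deriv y x * Real.exp (-A x) + K (y x) * (Real.exp (-A x) * (-a x))) x :=
    hyK.mul hexp
  have hdy : deriv y = fun x => K (y x) * Real.exp (-A x) := funext heq
  have hmul2 : HasDerivAt (fun x => K (y x) * Real.exp (-A x))
      (deriv K (y x) * (K (y x) * Real.exp (-A x)) * Real.exp (-A x)
        + K (y x) * (Real.exp (-A x) * (-a x))) x := by
    rw [← heq x]; exact hmul
  have hdd : deriv (deriv y) x
      = deriv K (y x) * (K (y x) * Real.exp (-A x)) * Real.exp (-A x)
        + K (y x) * (Real.exp (-A x) * (-a x)) := by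
    rw [hdy]; exact hmul2.deriv
  have hE : Real.exp (-A x) * Real.exp (A x) = 1 := by
    rw [← Real.exp_add]; simp
  have harg : deriv y x * Real.exp (A x) = K (y x) := by
    rw [heq x, mul_assoc, hE, mul_one]
  have hpow : Real.exp (-((m : ℝ) + 2) * A x) = Real.exp (-A x) ^ (m + 2) := by
    rw [← Real.exp_nat_mul]
    norm_num
    ring_nf
  rw [hdd, harg, heq x, hpow]
  rw [← hKeq (y x)]
  ring
end

section
/- Let m be a natural number, a : ℝ → ℝ continuous with antiderivative A, and F : ℝ × ℝ → ℝ. Suppose K : ℝ → ℝ is differentiable and satisfies K(x)^m·K'(x) = F(x, K(x)) for all x. If y : ℝ → ℝ is twice differentiable and satisfies y'(x) = K(x)·exp(−A(y(x))) for all x, then y satisfies (y'(x))^m·y''(x) + a(y(x))·(y'(x))^{m+2} = exp(−(m+1)·A(y(x)))·F(x, y'(x)·exp(A(y(x)))) for all x. -/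
/-- Fourth-class reduction: if `K^m·K' = F(x, K(x))` and `y' = K(x)·e^{-A(y)}`,
then `(y')^m y'' + a(y)(y')^{m+2} = e^{-(m+1)A(y)}·F(x, y'·e^{A(y)})`. -/
theorem stmt_3 (m : ℕ) (a A K y : ℝ → ℝ) (F : ℝ × ℝ → ℝ)
    (ha : Continuous a)
    (hA : ∀ u, HasDerivAt A (a u) u)
    (hKdiff : Differentiable ℝ K)
    (hKeq : ∀ x, K x ^ m * deriv K x = F (x, K x))
    (hy : Differentiable ℝ y) (hy' : Differentiable ℝ (deriv y))
    (heq : ∀ x, deriv y x = K x * Real.exp (-A (y x))) :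
    ∀ x, (deriv y x) ^ m * deriv (deriv y) x + a (y x) * (deriv y x) ^ (m + 2)
      = Real.exp (-((m : ℝ) + 1) * A (y x)) * F (x, deriv y x * Real.exp (A (y x))) := by
  intro x
  have hyd : HasDerivAt y (deriv y x) x := (hy x).hasDerivAt
  -- derivative of x ↦ A (y x)
  have hAy : HasDerivAt (fun t => A (y t)) (a (y x) * deriv y x) x :=
    (hA (y x)).comp x hyd
  have hexp : HasDerivAt (fun t => Real.exp (-A (y t)))
      (Real.exp (-A (y x)) * -(a (y x) * deriv y x)) x := by
    have hneg : HasDerivAt (fun t => -A (y t)) (-(a (y x) * deriv y x)) x := hAy.neg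
    exact (Real.hasDerivAt_exp (-A (y x))).comp x hneg
  have hKd : HasDerivAt K (deriv K x) x := (hKdiff x).hasDerivAt
  have hprod : HasDerivAt (fun t => K t * Real.exp (-A (y t)))
      (deriv K x * Real.exp (-A (y x)) +
        K x * (Real.exp (-A (y x)) * -(a (y x) * deriv y x))) x := hKd.mul hexp
  have hfun : deriv y = fun t => K t * Real.exp (-A (y t)) := funext heq
  have hy'' : deriv (deriv y) x
      = deriv K x * Real.exp (-A (y x)) +
        K x * (Real.exp (-A (y x)) * -(a (y x) * deriv y x)) := by
    conv_lhs => rw [hfun]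
    exact hprod.deriv
  have hE : Real.exp (-A (y x)) * Real.exp (A (y x)) = 1 := by
    rw [← Real.exp_add]; simp
  have hK : deriv y x * Real.exp (A (y x)) = K x := by
    rw [heq x, mul_assoc, hE, mul_one]
  have hpow : Real.exp (-((m : ℝ) + 1) * A (y x)) = Real.exp (-A (y x)) ^ (m + 1) := by
    rw [← Real.exp_nat_mul]
    congr 1
    push_cast
    ring
  rw [hy'', hK, hpow, ← hKeq x, heq x]
  ring
end

section
/- If K : ℝ → ℝ is differentiable and satisfies K(y)·K'(y) = K(y) + 2y for all y in an open interval I, then the function y ↦ (K(y) − 2y)²·(K(y) + y) is constant on I. -/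
/-- If `K` is differentiable and satisfies `K·K' = K + 2y` on an open interval `(p, q)`,
then `(K - 2y)²·(K + y)` is constant on that interval. -/
theorem stmt_5 (p q : ℝ) (K : ℝ → ℝ)
    (hK : ∀ y ∈ Set.Ioo p q, DifferentiableAt ℝ K y)
    (heq : ∀ y ∈ Set.Ioo p q, K y * deriv K y = K y + 2 * y) :
    ∃ c : ℝ, ∀ y ∈ Set.Ioo p q, (K y - 2 * y) ^ 2 * (K y + y) = c := by
  rcases Set.eq_empty_or_nonempty (Set.Ioo p q) with h | ⟨y0, hy0⟩
  · exact ⟨0, fun y hy => absurd hy (h ▸ Set.notMem_empty y)⟩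
  set F : ℝ → ℝ := fun y => (K y - 2 * y) ^ 2 * (K y + y) with hF
  have hder : ∀ y ∈ Set.Ioo p q, HasDerivAt F 0 y := by
    intro y hy
    have hKy := (hK y hy).hasDerivAt
    have h1 : HasDerivAt (fun y => (K y - 2 * y) ^ 2 * (K y + y))
        (2 * (K y - 2 * y) ^ 1 * (deriv K y - 2) * (K y + y)
          + (K y - 2 * y) ^ 2 * (deriv K y + 1)) y := by
      have := (((hKy.sub ((hasDerivAt_id y).const_mul 2)).pow 2).mul
        (hKy.add (hasDerivAt_id y)))
      simp at this; simp only [pow_one]; exact this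
    convert h1 using 1
    have h2 := heq y hy
    linear_combination (-3 * (K y - 2 * y)) * h2
  refine ⟨F y0, fun y hy => ?_⟩
  have := (convex_Ioo p q).is_const_of_fderivWithin_eq_zero
    (fun z hz => ((hder z hz).differentiableAt).differentiableWithinAt)
    (fun z hz => ?_) hy hy0
  · exact this
  · have : fderivWithin ℝ F (Set.Ioo p q) z = fderiv ℝ F z :=
      fderivWithin_of_isOpen isOpen_Ioo hz
    rw [this, (hder z hz).hasFDerivAt.fderiv]
    ext
    simp
end

section
/- Let F : ℝ → ℝ be continuous, n ≥ 1 a natural number, β ∈ ℝ, and H an antiderivative of F. If y : ℝ → ℝ is twice differentiable, nowhere zero, and satisfies y'(x) = (H(x)+A)·y(x) + (β/n)·y(x)^{n+1} for all x (for some constant A), then y satisfies y''(x) − (y'(x))²/y(x) = F(x)·y(x) + β·y'(x)·y(x)^n for all x. -/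
/-- Second-class example: if `y' = (H(x)+A)y + (β/n)y^{n+1}` with `H' = F` and `y` nowhere
zero, then `y'' - (y')²/y = F(x)·y + β·y'·y^n`. -/
theorem stmt_7 (F H y : ℝ → ℝ) (n : ℕ) (hn : 1 ≤ n) (β A : ℝ)
    (hF : Continuous F)
    (hH : ∀ x, HasDerivAt H (F x) x)
    (hy : Differentiable ℝ y) (hy' : Differentiable ℝ (deriv y))
    (hy0 : ∀ x, y x ≠ 0)
    (heq : ∀ x, deriv y x = (H x + A) * y x + (β / n) * y x ^ (n + 1)) :
    ∀ x, deriv (deriv y) x - (deriv y x) ^ 2 / y x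
      = F x * y x + β * deriv y x * y x ^ n := by
  intro x
  have hn0 : (n : ℝ) ≠ 0 := Nat.cast_ne_zero.mpr (by omega)
  have hg : ∀ t, HasDerivAt y ((H t + A) * y t + (β / n) * y t ^ (n + 1)) t := by
    intro t
    have := (hy t).hasDerivAt
    rwa [heq t] at this
  have hd : HasDerivAt (deriv y)
      ((F x * y x + (H x + A) * ((H x + A) * y x + (β / n) * y x ^ (n + 1)))
        + (β / n) * ((↑(n + 1) : ℝ) * y x ^ n *
            ((H x + A) * y x + (β / n) * y x ^ (n + 1)))) x := by
    have : deriv y = fun t => (H t + A) * y t + (β / n) * y t ^ (n + 1) := funext heq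
    rw [this]
    have h1 := ((hH x).add_const A).mul (hg x)
    have h2 := ((hg x).pow (n + 1)).const_mul (β / n)
    have := h1.add h2
    simpa [Pi.add_def, Pi.mul_def] using this
  have key := hd.deriv
  rw [key, heq x]
  simp only [pow_succ (y x) n, Nat.cast_add, Nat.cast_one]
  have e1 : ((H x + A) * y x + β / ↑n * (y x ^ n * y x)) ^ 2 / y x
      = y x * ((H x + A) + β / ↑n * y x ^ n) ^ 2 := by
    rw [div_eq_iff (hy0 x)]; ring
  rw [e1]
  field_simp
  ring
end
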